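/- Let K be an algebraically closed field of characteristic 2, k ≥ 2 a natural number, and b, c ∈ K with b^{5k−6} = c^{5k−6} and b, c nonzero. Then the K-algebras Q(2A)^k(b) and Q(2A)^k(c) are isomorphic; explicitly, choosing d ∈ K with d² = b^{−1}c, the assignment α ↦ d²α, β ↦ β, γ ↦ d³γ defines a K-algebra isomorphism Q(2A)^k(b) → Q(2A)^k(c). -/
import Mathlib


/- The algebra Q(2A)^k(b): quiver with vertices 1,2, loop α at 1,
   arrows β : 1 → 2, γ : 2 → 1, with relations
   α² = (βγα)^{k−1}βγ + b(βγα)^k, βγβ = (αβγ)^{k−1}αβ,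
   γβγ = (γαβ)^{k−1}γα, α²β = 0. -/

namespace SocleWSA6

variable (K : Type) [Field K]

/-- Generators: 0 = e₁, 1 = e₂, 2 = α, 3 = β, 4 = γ. -/
noncomputable def e1 : FreeAlgebra K (Fin 5) := FreeAlgebra.ι K 0
noncomputable def e2 : FreeAlgebra K (Fin 5) := FreeAlgebra.ι K 1
noncomputable def al : FreeAlgebra K (Fin 5) := FreeAlgebra.ι K 2
noncomputable def be : FreeAlgebra K (Fin 5) := FreeAlgebra.ι K 3
noncomputable def ga : FreeAlgebra K (Fin 5) := FreeAlgebra.ι K 4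

inductive QARel (k : ℕ) (b : K) : FreeAlgebra K (Fin 5) → FreeAlgebra K (Fin 5) → Prop
  | unit : QARel k b (e1 K + e2 K) 1
  | idem1 : QARel k b (e1 K * e1 K) (e1 K)
  | idem2 : QARel k b (e2 K * e2 K) (e2 K)
  | orth12 : QARel k b (e1 K * e2 K) 0
  | orth21 : QARel k b (e2 K * e1 K) 0
  | sal : QARel k b (e1 K * al K) (al K)
  | tal : QARel k b (al K * e1 K) (al K)
  | sbe : QARel k b (e1 K * be K) (be K)
  | tbe : QARel k b (be K * e2 K) (be K)
  | sga : QARel k b (e2 K * ga K) (ga K)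
  | tga : QARel k b (ga K * e1 K) (ga K)
  | r1 : QARel k b (al K * al K)
      ((be K * ga K * al K) ^ (k - 1) * (be K * ga K) + b • (be K * ga K * al K) ^ k)
  | r2 : QARel k b (be K * ga K * be K) ((al K * be K * ga K) ^ (k - 1) * (al K * be K))
  | r3 : QARel k b (ga K * be K * ga K) ((ga K * al K * be K) ^ (k - 1) * (ga K * al K))
  | r4 : QARel k b (al K * al K * be K) 0

/-- The canonical projection onto `Q(2A)^k(b)`. -/
noncomputable def pi (k : ℕ) (b : K) :
    FreeAlgebra K (Fin 5) →ₐ[K] RingQuot (QARel K k b) :=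
  RingQuot.mkAlgHom K (QARel K k b)

end SocleWSA6

namespace SocleWSA6

variable (K : Type) [Field K]

noncomputable def genMap (k : ℕ) (c d : K) : Fin 5 → RingQuot (QARel K k c)
  | 0 => pi K k c (e1 K)
  | 1 => pi K k c (e2 K)
  | 2 => d ^ 2 • pi K k c (al K)
  | 3 => pi K k c (be K)
  | 4 => d ^ 3 • pi K k c (ga K)

noncomputable def F (k : ℕ) (c d : K) : FreeAlgebra K (Fin 5) →ₐ[K] RingQuot (QARel K k c) :=
  FreeAlgebra.lift K (genMap K k c d)

lemma F_e1 (k : ℕ) (c d : K) : F K k c d (e1 K) = pi K k c (e1 K) := by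
  simp [F, e1, genMap]
lemma F_e2 (k : ℕ) (c d : K) : F K k c d (e2 K) = pi K k c (e2 K) := by
  simp [F, e2, genMap]
lemma F_al (k : ℕ) (c d : K) : F K k c d (al K) = d ^ 2 • pi K k c (al K) := by
  simp [F, al, genMap]
lemma F_be (k : ℕ) (c d : K) : F K k c d (be K) = pi K k c (be K) := by
  simp [F, be, genMap]
lemma F_ga (k : ℕ) (c d : K) : F K k c d (ga K) = d ^ 3 • pi K k c (ga K) := by
  simp [F, ga, genMap]

lemma respects (k : ℕ) (hk : 2 ≤ k) (b c d : K) (hd0 : d ≠ 0)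
    (hd1 : d ^ (5 * k - 6) = 1) (hbd : b * d ^ 2 = c) :
    ∀ ⦃x y : FreeAlgebra K (Fin 5)⦄, QARel K k b x y → F K k c d x = F K k c d y := by
  have dshift : ∀ m r : ℕ, m = (5 * k - 6) + r → d ^ m = d ^ r := by
    intro m r h
    rw [h, pow_add, hd1, one_mul]
  have hP : (d ^ 5) ^ (k - 1) = d := by
    have h1 : (d ^ 5) ^ (k - 1) * d ^ 5 = d * d ^ 5 := by
      rw [← pow_succ, show k - 1 + 1 = k from by omega, ← pow_mul,
        dshift (5 * k) 6 (by omega)]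
      ring
    exact mul_right_cancel₀ (pow_ne_zero 5 hd0) h1
  have hPk : (d ^ 5) ^ k = d ^ 6 := by
    rw [show k = (k - 1) + 1 from by omega, pow_succ, hP]
    ring
  intro x y h
  induction h with
  | unit =>
      have h := RingQuot.mkAlgHom_rel K (QARel.unit (K := K) (k := k) (b := c))
      simp only [map_add, map_one] at h ⊢
      simpa [F_e1, F_e2, pi] using h
  | idem1 =>
      have h := RingQuot.mkAlgHom_rel K (QARel.idem1 (K := K) (k := k) (b := c))
      simp only [map_mul] at h
      simpa [F_e1, pi] using h
  | idem2 =>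
      have h := RingQuot.mkAlgHom_rel K (QARel.idem2 (K := K) (k := k) (b := c))
      simp only [map_mul] at h
      simpa [F_e2, pi] using h
  | orth12 =>
      have h := RingQuot.mkAlgHom_rel K (QARel.orth12 (K := K) (k := k) (b := c))
      simp only [map_mul, map_zero] at h
      simpa [F_e1, F_e2, pi] using h
  | orth21 =>
      have h := RingQuot.mkAlgHom_rel K (QARel.orth21 (K := K) (k := k) (b := c))
      simp only [map_mul, map_zero] at h
      simpa [F_e1, F_e2, pi] using h
  | sal =>
      have h := RingQuot.mkAlgHom_rel K (QARel.sal (K := K) (k := k) (b := c))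
      simp only [map_mul] at h
      simp only [map_mul, F_e1, F_al, mul_smul_comm, pi] at *
      rw [h]
  | tal =>
      have h := RingQuot.mkAlgHom_rel K (QARel.tal (K := K) (k := k) (b := c))
      simp only [map_mul] at h
      simp only [map_mul, F_e1, F_al, smul_mul_assoc, pi] at *
      rw [h]
  | sbe =>
      have h := RingQuot.mkAlgHom_rel K (QARel.sbe (K := K) (k := k) (b := c))
      simp only [map_mul] at h
      simp only [map_mul, F_e1, F_be, pi] at *
      rw [h]
  | tbe =>
      have h := RingQuot.mkAlgHom_rel K (QARel.tbe (K := K) (k := k) (b := c))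
      simp only [map_mul] at h
      simp only [map_mul, F_e2, F_be, pi] at *
      rw [h]
  | sga =>
      have h := RingQuot.mkAlgHom_rel K (QARel.sga (K := K) (k := k) (b := c))
      simp only [map_mul] at h
      simp only [map_mul, F_e2, F_ga, mul_smul_comm, pi] at *
      rw [h]
  | tga =>
      have h := RingQuot.mkAlgHom_rel K (QARel.tga (K := K) (k := k) (b := c))
      simp only [map_mul] at h
      simp only [map_mul, F_e1, F_ga, smul_mul_assoc, pi] at *
      rw [h]
  | r1 =>
      have h := RingQuot.mkAlgHom_rel K (QARel.r1 (K := K) (k := k) (b := c))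
      simp only [map_add, map_mul, map_pow, map_smul] at h
      simp only [map_add, map_mul, map_pow, map_smul, F_al, F_be, F_ga,
        smul_mul_assoc, mul_smul_comm, smul_smul, smul_pow, pi] at *
      rw [h, smul_add, smul_smul]
      congr 1
      · congr 1
        simp only [show (d ^ 2 * d ^ 3 : K) = d ^ 5 from by ring,
          show (d ^ 3 * d ^ 2 : K) = d ^ 5 from by ring, hP, hPk]
        ring
      · congr 1
        simp only [show (d ^ 2 * d ^ 3 : K) = d ^ 5 from by ring,
          show (d ^ 3 * d ^ 2 : K) = d ^ 5 from by ring, hP, hPk]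
        rw [← hbd]
        ring
  | r2 =>
      have h := RingQuot.mkAlgHom_rel K (QARel.r2 (K := K) (k := k) (b := c))
      simp only [map_mul, map_pow] at h
      simp only [map_mul, map_pow, F_al, F_be, F_ga,
        smul_mul_assoc, mul_smul_comm, smul_smul, smul_pow, pi] at *
      rw [h]
      congr 1
      simp only [show (d ^ 2 * d ^ 3 : K) = d ^ 5 from by ring,
        show (d ^ 3 * d ^ 2 : K) = d ^ 5 from by ring, hP, hPk]
      ring
  | r3 =>
      have h := RingQuot.mkAlgHom_rel K (QARel.r3 (K := K) (k := k) (b := c))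
      simp only [map_mul, map_pow] at h
      simp only [map_mul, map_pow, F_al, F_be, F_ga,
        smul_mul_assoc, mul_smul_comm, smul_smul, smul_pow, pi] at *
      rw [h]
      congr 1
      simp only [show (d ^ 2 * d ^ 3 : K) = d ^ 5 from by ring,
        show (d ^ 3 * d ^ 2 : K) = d ^ 5 from by ring, hP, hPk]
      ring
  | r4 =>
      have h := RingQuot.mkAlgHom_rel K (QARel.r4 (K := K) (k := k) (b := c))
      simp only [map_mul, map_zero] at h
      simp only [map_mul, map_zero, F_al, F_be,
        smul_mul_assoc, mul_smul_comm, smul_smul, pi] at *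
      rw [h, smul_zero]

noncomputable def phi (k : ℕ) (hk : 2 ≤ k) (b c d : K) (hd0 : d ≠ 0)
    (hd1 : d ^ (5 * k - 6) = 1) (hbd : b * d ^ 2 = c) :
    RingQuot (QARel K k b) →ₐ[K] RingQuot (QARel K k c) :=
  RingQuot.liftAlgHom K ⟨F K k c d, respects K k hk b c d hd0 hd1 hbd⟩

lemma phi_pi (k : ℕ) (hk : 2 ≤ k) (b c d : K) (hd0 : d ≠ 0)
    (hd1 : d ^ (5 * k - 6) = 1) (hbd : b * d ^ 2 = c) (x : FreeAlgebra K (Fin 5)) :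
    phi K k hk b c d hd0 hd1 hbd (pi K k b x) = F K k c d x :=
  RingQuot.liftAlgHom_mkAlgHom_apply K (F K k c d) _ x

lemma phi_mk (k : ℕ) (hk : 2 ≤ k) (b c d : K) (hd0 : d ≠ 0)
    (hd1 : d ^ (5 * k - 6) = 1) (hbd : b * d ^ 2 = c) (x : FreeAlgebra K (Fin 5)) :
    phi K k hk b c d hd0 hd1 hbd (RingQuot.mkAlgHom K (QARel K k b) x) = F K k c d x :=
  RingQuot.liftAlgHom_mkAlgHom_apply K (F K k c d) _ x

lemma F_iota (k : ℕ) (c d : K) (i : Fin 5) :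
    F K k c d (FreeAlgebra.ι K i) = genMap K k c d i :=
  FreeAlgebra.lift_ι_apply _ _

end SocleWSA6


open SocleWSA6 in
/-- Let `K` be algebraically closed of characteristic 2,
`k ≥ 2`, `b, c ∈ K` nonzero with `b^{5k−6} = c^{5k−6}`.  Then for any
`d ∈ K` with `d² = b⁻¹ c`, the assignment `α ↦ d²α`, `β ↦ β`, `γ ↦ d³γ`
defines a `K`-algebra isomorphism `Q(2A)^k(b) → Q(2A)^k(c)`; in particular
the two algebras are isomorphic. -/
theorem socle_wsa_stmt6 (K : Type) [Field K] [IsAlgClosed K] (hchar : CharP K 2)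
    (k : ℕ) (hk : 2 ≤ k) (b c : K) (hb : b ≠ 0) (hc : c ≠ 0)
    (hbc : b ^ (5 * k - 6) = c ^ (5 * k - 6))
    (d : K) (hd : d ^ 2 = b⁻¹ * c) :
    ∃ h : RingQuot (QARel K k b) ≃ₐ[K] RingQuot (QARel K k c),
      h (pi K k b (al K)) = d ^ 2 • pi K k c (al K) ∧
      h (pi K k b (be K)) = pi K k c (be K) ∧
      h (pi K k b (ga K)) = d ^ 3 • pi K k c (ga K) := by
  have hd0 : d ≠ 0 := by
    have h2 : d ^ 2 ≠ 0 := hd ▸ mul_ne_zero (inv_ne_zero hb) hc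
    intro h0
    exact h2 (by rw [h0]; ring)
  have hbd : b * d ^ 2 = c := by
    rw [hd]
    field_simp
  have hch2 : (2 : K) = 0 := CharP.cast_eq_zero K 2
  have hsq : (d ^ (5 * k - 6)) ^ 2 = 1 := by
    rw [← pow_mul, mul_comm, pow_mul, hd]
    rw [mul_pow, ← hbc, inv_pow, inv_mul_cancel₀ (pow_ne_zero _ hb)]
  have hd1 : d ^ (5 * k - 6) = 1 := by
    have hz : (d ^ (5 * k - 6) - 1) ^ 2 = 0 := by
      linear_combination hsq + (1 - d ^ (5 * k - 6)) * hch2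
    have h0 := sq_eq_zero_iff.mp hz
    have := sub_eq_zero.mp h0
    exact this
  have hd0' : d⁻¹ ≠ 0 := inv_ne_zero hd0
  have hd1' : (d⁻¹) ^ (5 * k - 6) = 1 := by rw [inv_pow, hd1, inv_one]
  have hbd' : c * (d⁻¹) ^ 2 = b := by
    rw [← hbd]
    field_simp
  let f := phi K k hk b c d hd0 hd1 hbd
  let g := phi K k hk c b d⁻¹ hd0' hd1' hbd'
  have hdd : d ^ 2 * (d⁻¹) ^ 2 = 1 := by field_simp
  have hdd3 : d ^ 3 * (d⁻¹) ^ 3 = 1 := by field_simp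
  have hgf : g.comp f = AlgHom.id K (RingQuot (QARel K k b)) := by
    apply RingQuot.ringQuot_ext'
    apply FreeAlgebra.hom_ext
    funext i
    fin_cases i <;>
      simp [f, g, phi_mk, F_iota, e1, e2, al, be, ga, genMap, pi, map_smul, smul_smul, hdd, hdd3,
        show (d⁻¹ ^ 2 * d ^ 2 : K) = 1 from by field_simp,
        show (d⁻¹ ^ 3 * d ^ 3 : K) = 1 from by field_simp,
        mul_inv_cancel₀ (pow_ne_zero 2 hd0), mul_inv_cancel₀ (pow_ne_zero 3 hd0),
        inv_mul_cancel₀ (pow_ne_zero 2 hd0), inv_mul_cancel₀ (pow_ne_zero 3 hd0)]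
  have hfg : f.comp g = AlgHom.id K (RingQuot (QARel K k c)) := by
    apply RingQuot.ringQuot_ext'
    apply FreeAlgebra.hom_ext
    funext i
    have hdd' : (d⁻¹) ^ 2 * d ^ 2 = 1 := by field_simp
    have hdd3' : (d⁻¹) ^ 3 * d ^ 3 = 1 := by field_simp
    fin_cases i <;>
      simp [f, g, phi_mk, F_iota, e1, e2, al, be, ga, genMap, pi, map_smul, smul_smul, hdd, hdd3,
        show (d⁻¹ ^ 2 * d ^ 2 : K) = 1 from by field_simp,
        show (d⁻¹ ^ 3 * d ^ 3 : K) = 1 from by field_simp,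
        mul_inv_cancel₀ (pow_ne_zero 2 hd0), mul_inv_cancel₀ (pow_ne_zero 3 hd0),
        inv_mul_cancel₀ (pow_ne_zero 2 hd0), inv_mul_cancel₀ (pow_ne_zero 3 hd0)]
  refine ⟨AlgEquiv.ofAlgHom f g hfg hgf, ?_, ?_, ?_⟩
  · show f (pi K k b (al K)) = _
    rw [phi_pi, F_al]
  · show f (pi K k b (be K)) = _
    rw [phi_pi, F_be]
  · show f (pi K k b (ga K)) = _
    rw [phi_pi, F_ga]
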